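/- Let λ ∈ [0,1] and let A : [0,1] → ℝ be a convex function with max{t, 1−t} ≤ A(t) ≤ 1 for all t ∈ [0,1] and A(1/2) = 1 − λ/2. Then 12∫₀¹ dt/(A(t)+1)² − 3 ≤ 1 − 16((1−λ)/(4−λ))², with equality for A(t) = max{t, 1−t, 1 − λ/2}. (Upper bound on Spearman's ρ of an extreme value copula with upper tail dependence coefficient λ.) -/

import Mathlib

open MeasureTheory Filter Set Real

noncomputable section

lemma integ_lin (a s p q : ℝ) (hpq : p ≤ q) (hp : 0 < a + s*p) (hq : 0 < a + s*q) :
    ∫ t in p..q, 1/(a + s*t)^2 = (q - p)/((a + s*p)*(a + s*q)) := by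
  have hpos : ∀ t ∈ Icc p q, 0 < a + s*t := by
    intro t ht
    rcases le_total 0 s with h | h
    · nlinarith [ht.1, ht.2]
    · nlinarith [ht.1, ht.2]
  have hcont : ContinuousOn (fun t => 1/(a + s*t)^2) (Icc p q) := by
    apply ContinuousOn.div continuousOn_const
    · fun_prop
    · intro t ht
      have := hpos t ht
      positivity
  have hint : IntervalIntegrable (fun t => 1/(a + s*t)^2) volume p q := by
    apply ContinuousOn.intervalIntegrable
    rwa [uIcc_of_le hpq]
  by_cases hs : s = 0
  · subst hs
    simp only [zero_mul, add_zero] at hp ⊢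
    rw [intervalIntegral.integral_const]
    rw [smul_eq_mul]
    field_simp
  · have hderiv : ∀ t ∈ uIcc p q, HasDerivAt (fun t => -s⁻¹ * (a + s*t)⁻¹) (1/(a + s*t)^2) t := by
      intro t ht
      rw [uIcc_of_le hpq] at ht
      have h1 : HasDerivAt (fun t : ℝ => a + s*t) s t := by
        simpa using ((hasDerivAt_id t).const_mul s).const_add a
      have h2 := (h1.inv (ne_of_gt (hpos t ht))).const_mul (-s⁻¹)
      refine HasDerivAt.congr_deriv h2 ?_
      field_simp
    rw [intervalIntegral.integral_eq_sub_of_hasDerivAt hderiv hint]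
    field_simp
    ring

lemma Mhalf (lam s t : ℝ) : (1/2 : ℝ) ≤ max t (max (1 - t) (1 - lam/2 + s*(t - 1/2))) := by
  rcases le_total t (1/2) with h | h
  · exact le_trans (by linarith) (le_trans (le_max_left _ _) (le_max_right _ _))
  · exact le_trans h (le_max_left _ _)

lemma Mcont (lam s : ℝ) :
    Continuous (fun t : ℝ => 1/(max t (max (1 - t) (1 - lam/2 + s*(t - 1/2))) + 1)^2) := by
  apply Continuous.div continuous_const
  · fun_prop
  · intro t
    have := Mhalf lam s t
    positivity

set_option maxHeartbeats 1000000 in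
lemma fin (lam s t₁ t₂ : ℝ) (h0 : 0 ≤ lam) (h1 : lam ≤ 1)
    (h1s : (0:ℝ) < 1+s) (h2s : (0:ℝ) < 1-s)
    (ht1 : t₁ = (lam+s)/(2*(1+s))) (ht2 : t₂ = (2-lam-s)/(2*(1-s)))
    (ht1h : t₁ ≤ 1/2) (ht2h : 1/2 ≤ t₂) :
    (t₁ - 0)/((2 + -1*0)*(2 + -1*t₁)) + ((t₂ - t₁)/((2 - t₁)*(1 + t₂)) + (1 - t₂)/((1 + 1*t₂)*(1 + 1*1)))
      = (20 - 8*lam - 12*s^2)/((4 - lam)^2 - 9*s^2) - 1 := by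
  have hp : (0:ℝ) < 4 + 3*s - lam := by linarith
  have hq : (0:ℝ) < 4 - 3*s - lam := by linarith
  have hD : (0:ℝ) < (4 - lam)^2 - 9*s^2 := by nlinarith
  have hn1 : (0:ℝ) < 2 - t₁ := by linarith
  have hn2 : (0:ℝ) < 1 + t₂ := by linarith
  have L1 : (t₁ - 0)/((2 + -1*0)*(2 + -1*t₁)) = t₁/(2*(2-t₁)) := by ring
  have L3 : (1 - t₂)/((1 + 1*t₂)*(1 + 1*1)) = (1-t₂)/((1+t₂)*2) := by ring
  rw [L1, L3]
  have r1 : t₁*(2*(1+s)) = lam + s := by rw [ht1]; field_simp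
  have r2 : t₂*(2*(1-s)) = 2 - lam - s := by rw [ht2]; field_simp
  have E1 : t₁/(2*(2-t₁)) = (lam+s)/(2*(4 + 3*s - lam)) := by
    rw [div_eq_div_iff (by positivity) (by positivity)]
    linear_combination 4*r1
  have E2 : (t₂ - t₁)/((2 - t₁)*(1 + t₂)) = 4*(1-lam)/((4 - lam)^2 - 9*s^2) := by
    rw [div_eq_div_iff (by positivity) (ne_of_gt hD)]
    subst ht1; subst ht2
    field_simp
    ring
  have E3 : (1-t₂)/((1+t₂)*2) = (lam - s)/(2*(4 - 3*s - lam)) := by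
    rw [div_eq_div_iff (by positivity) (by positivity)]
    linear_combination (-4)*r2
  rw [E1, E2, E3]
  have hDpq : (4 - lam)^2 - 9*s^2 = (4 + 3*s - lam) * (4 - 3*s - lam) := by ring
  rw [hDpq]
  rw [div_add_div _ _ (by positivity) (by positivity), div_add_div _ _ (by positivity) (by positivity), div_sub_one (by positivity), div_eq_div_iff (by positivity) (by positivity)]
  ring

set_option maxHeartbeats 1000000 in
lemma Hval (lam s : ℝ) (h0 : 0 ≤ lam) (h1 : lam ≤ 1) (hsl : -lam ≤ s) (hsr : s ≤ lam)
    (hs1 : -1 < s) (hs2 : s < 1) :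
    ∫ t in (0:ℝ)..1, 1/(max t (max (1 - t) (1 - lam/2 + s*(t - 1/2))) + 1)^2
      = (20 - 8*lam - 12*s^2)/((4 - lam)^2 - 9*s^2) - 1 := by
  have h1s : (0:ℝ) < 1 + s := by linarith
  have h2s : (0:ℝ) < 1 - s := by linarith
  set t₁ : ℝ := (lam + s)/(2*(1 + s)) with ht1def
  set t₂ : ℝ := (2 - lam - s)/(2*(1 - s)) with ht2def
  have ht10 : 0 ≤ t₁ := div_nonneg (by linarith) (by linarith)
  have ht1h : t₁ ≤ 1/2 := by rw [ht1def, div_le_iff₀ (by linarith)]; linarith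
  have ht2h : 1/2 ≤ t₂ := by rw [ht2def, le_div_iff₀ (by linarith)]; linarith
  have ht21 : t₂ ≤ 1 := by rw [ht2def, div_le_iff₀ (by linarith)]; linarith
  have ht12 : t₁ ≤ t₂ := le_trans ht1h ht2h
  have r1 : t₁ * (2*(1 + s)) = lam + s := by rw [ht1def]; field_simp
  have r2 : t₂ * (2*(1 - s)) = 2 - lam - s := by rw [ht2def]; field_simp
  have e1 : 2 - lam/2 - s/2 + s*t₁ = 2 - t₁ := by nlinarith [r1]
  have e2 : 2 - lam/2 - s/2 + s*t₂ = 1 + t₂ := by nlinarith [r2]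
  have hMi : ∀ u v : ℝ, IntervalIntegrable
      (fun t => 1/(max t (max (1 - t) (1 - lam/2 + s*(t - 1/2))) + 1)^2) volume u v :=
    fun u v => (Mcont lam s).intervalIntegrable u v
  rw [← intervalIntegral.integral_add_adjacent_intervals (hMi 0 t₁) (hMi t₁ 1),
      ← intervalIntegral.integral_add_adjacent_intervals (hMi t₁ t₂) (hMi t₂ 1)]
  have P1 : ∫ t in (0:ℝ)..t₁, 1/(max t (max (1 - t) (1 - lam/2 + s*(t - 1/2))) + 1)^2
      = (t₁ - 0)/((2 + (-1)*0)*(2 + (-1)*t₁)) := by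
    rw [show ∫ t in (0:ℝ)..t₁, 1/(max t (max (1 - t) (1 - lam/2 + s*(t - 1/2))) + 1)^2
        = ∫ t in (0:ℝ)..t₁, 1/(2 + (-1)*t)^2 from
      intervalIntegral.integral_congr (by
        rw [uIcc_of_le ht10]
        intro t ht
        have htt : t ≤ 1/2 := le_trans ht.2 ht1h
        have hA : t ≤ 1 - t := by linarith
        have hB : 1 - lam/2 + s*(t - 1/2) ≤ 1 - t := by nlinarith [ht.2, r1, mul_le_mul_of_nonneg_right ht.2 (le_of_lt (by linarith : (0:ℝ) < 2*(1+s)))]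
        simp only [max_eq_left hB, max_eq_right hA]
        ring_nf)]
    exact integ_lin 2 (-1) 0 t₁ ht10 (by norm_num) (by linarith)
  have P2 : ∫ t in t₁..t₂, 1/(max t (max (1 - t) (1 - lam/2 + s*(t - 1/2))) + 1)^2
      = (t₂ - t₁)/((2 - lam/2 - s/2 + s*t₁)*(2 - lam/2 - s/2 + s*t₂)) := by
    rw [show ∫ t in t₁..t₂, 1/(max t (max (1 - t) (1 - lam/2 + s*(t - 1/2))) + 1)^2
        = ∫ t in t₁..t₂, 1/((2 - lam/2 - s/2) + s*t)^2 from
      intervalIntegral.integral_congr (by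
        rw [uIcc_of_le ht12]
        intro t ht
        have hB : 1 - t ≤ 1 - lam/2 + s*(t - 1/2) := by
          nlinarith [r1, mul_le_mul_of_nonneg_right ht.1 (le_of_lt (by linarith : (0:ℝ) < 2*(1+s)))]
        have hC : t ≤ 1 - lam/2 + s*(t - 1/2) := by
          nlinarith [r2, mul_le_mul_of_nonneg_right ht.2 (le_of_lt (by linarith : (0:ℝ) < 2*(1-s)))]
        simp only [max_eq_right hB, max_eq_right hC]
        ring_nf)]
    have := integ_lin (2 - lam/2 - s/2) s t₁ t₂ ht12
      (by rw [e1]; linarith) (by rw [e2]; linarith)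
    exact this
  have P3 : ∫ t in t₂..(1:ℝ), 1/(max t (max (1 - t) (1 - lam/2 + s*(t - 1/2))) + 1)^2
      = ((1:ℝ) - t₂)/((1 + 1*t₂)*(1 + 1*1)) := by
    rw [show ∫ t in t₂..(1:ℝ), 1/(max t (max (1 - t) (1 - lam/2 + s*(t - 1/2))) + 1)^2
        = ∫ t in t₂..(1:ℝ), 1/(1 + 1*t)^2 from
      intervalIntegral.integral_congr (by
        rw [uIcc_of_le ht21]
        intro t ht
        have htt : 1/2 ≤ t := le_trans ht2h ht.1
        have hA : 1 - t ≤ t := by linarith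
        have hC : 1 - lam/2 + s*(t - 1/2) ≤ t := by
          nlinarith [r2, mul_le_mul_of_nonneg_right ht.1 (le_of_lt (by linarith : (0:ℝ) < 2*(1-s)))]
        simp only [max_eq_left (max_le hA hC)]
        ring_nf)]
    exact integ_lin 1 1 t₂ 1 ht21 (by linarith) (by norm_num)
  rw [P1, P2, P3, e1, e2]
  exact fin lam s t₁ t₂ h0 h1 h1s h2s ht1def ht2def ht1h ht2h


lemma support_line (lam : ℝ) (h0 : 0 ≤ lam) (h1 : lam ≤ 1) (A : ℝ → ℝ)
    (hconv : ConvexOn ℝ (Set.Icc (0:ℝ) 1) A)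
    (hA0 : A 0 = 1) (hA1 : A 1 = 1)
    (hmid : A (1 / 2) = 1 - lam / 2) :
    ∃ s, -lam ≤ s ∧ s ≤ lam ∧ ∀ t ∈ Set.Icc (0:ℝ) 1, 1 - lam/2 + s*(t - 1/2) ≤ A t := by
  set S : Set ℝ := {r | ∃ t, 0 ≤ t ∧ t < 1/2 ∧ r = (A (1/2) - A t)/(1/2 - t)} with hS
  have hmem0 : (A (1/2) - A 0)/(1/2 - 0) ∈ S := ⟨0, le_refl 0, by norm_num, rfl⟩
  have hne : S.Nonempty := ⟨_, hmem0⟩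
  have hub : ∀ r ∈ S, r ≤ lam := by
    rintro r ⟨t, ht0, ht2, rfl⟩
    have := hconv.slope_mono_adjacent (x := t) (y := 1/2) (z := 1)
      ⟨ht0, by linarith⟩ ⟨by norm_num, le_refl 1⟩ ht2 (by norm_num)
    rw [hA1, hmid] at this
    calc (A (1/2) - A t)/(1/2 - t) = (1 - lam/2 - A t)/(1/2 - t) := by rw [hmid]
    _ ≤ (1 - (1 - lam/2))/(1 - 1/2) := this
    _ = lam := by ring
  have hbdd : BddAbove S := ⟨lam, hub⟩
  set s := sSup S with hsdef
  have hsle : s ≤ lam := csSup_le hne hub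
  have hsge : -lam ≤ s := by
    have h := le_csSup hbdd hmem0
    have : (A (1/2) - A 0)/(1/2 - 0) = -lam := by rw [hA0, hmid]; ring
    linarith [this ▸ h]
  refine ⟨s, hsge, hsle, ?_⟩
  intro t ht
  rcases lt_trichotomy t (1/2) with h | h | h
  · have hr : (A (1/2) - A t)/(1/2 - t) ≤ s := le_csSup hbdd ⟨t, ht.1, h, rfl⟩
    rw [hmid] at hr
    have h2 : (0:ℝ) < 1/2 - t := by linarith
    rw [div_le_iff₀ h2] at hr
    nlinarith
  · subst h
    rw [hmid]
    have hz : s*((1:ℝ)/2 - 1/2) = 0 := by ring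
    linarith
  · have hall : ∀ r ∈ S, r ≤ (A t - A (1/2))/(t - 1/2) := by
      rintro r ⟨u, hu0, hu2, rfl⟩
      exact hconv.slope_mono_adjacent (x := u) (y := 1/2) (z := t)
        ⟨hu0, by linarith⟩ ⟨by linarith, ht.2⟩ hu2 h
    have hr : s ≤ (A t - A (1/2))/(t - 1/2) := csSup_le hne hall
    rw [hmid] at hr
    have h2 : (0:ℝ) < t - 1/2 := by linarith
    rw [le_div_iff₀ h2] at hr
    nlinarith


lemma key_ineq (lam s : ℝ) (A : ℝ → ℝ) (h0 : 0 ≤ lam) (h1 : lam ≤ 1)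
    (hsl : -lam ≤ s) (hsr : s ≤ lam) (hs1 : -1 < s) (hs2 : s < 1)
    (hAbd : ∀ t ∈ Set.Icc (0:ℝ) 1, max t (max (1-t) (1 - lam/2 + s*(t-1/2))) ≤ A t)
    (hint : IntervalIntegrable (fun t => 1/(A t + 1)^2) volume 0 1) :
    12 * (∫ t in (0:ℝ)..1, 1/(A t + 1)^2) - 3 ≤ 1 - 16*((1-lam)/(4-lam))^2 := by
  have hMint : IntervalIntegrable (fun t => 1/(max t (max (1-t) (1 - lam/2 + s*(t-1/2))) + 1)^2) volume 0 1 := (Mcont lam s).intervalIntegrable 0 1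
  have hmono : (∫ t in (0:ℝ)..1, 1/(A t + 1)^2)
      ≤ ∫ t in (0:ℝ)..1, 1/(max t (max (1-t) (1 - lam/2 + s*(t-1/2))) + 1)^2 := by
    apply intervalIntegral.integral_mono_on (by norm_num) hint hMint
    intro t ht
    have hM := Mhalf lam s t
    have hle := hAbd t ht
    have h2 : (max t (max (1-t) (1 - lam/2 + s*(t-1/2))) + 1)^2 ≤ (A t + 1)^2 := by nlinarith
    exact one_div_le_one_div_of_le (by positivity) h2
  rw [Hval lam s h0 h1 hsl hsr hs1 hs2] at hmono
  have h9 : (9:ℝ) ≤ (4 - lam)^2 := by nlinarith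
  have hsq : s^2 < 1 := by nlinarith
  have hD : (0:ℝ) < (4 - lam)^2 - 9*s^2 := by nlinarith
  have hD4 : (0:ℝ) < (4 - lam)^2 := by nlinarith
  have identity : 1 - 16*(1-lam)^2/(4-lam)^2
      - (12*((20 - 8*lam - 12*s^2)/((4-lam)^2 - 9*s^2) - 1) - 3)
      = 144*s^2*(1-lam)^2/(((4-lam)^2)*((4-lam)^2 - 9*s^2)) := by
    have hD' := hD.ne'
    have hD4' := hD4.ne'
    rw [div_sub_one hD', mul_div_assoc', div_sub' hD', one_sub_div hD4', div_sub_div _ _ hD4' hD', div_eq_div_iff (mul_ne_zero hD4' hD') (mul_ne_zero hD4' hD')]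
    ring
  have hpos : 0 ≤ 144*s^2*(1-lam)^2/(((4-lam)^2)*((4-lam)^2 - 9*s^2)) := by positivity
  have : 12*((20 - 8*lam - 12*s^2)/((4-lam)^2 - 9*s^2) - 1) - 3 ≤ 1 - 16*(1-lam)^2/(4-lam)^2 := by
    linarith
  calc 12 * (∫ t in (0:ℝ)..1, 1/(A t + 1)^2) - 3
      ≤ 12*((20 - 8*lam - 12*s^2)/((4-lam)^2 - 9*s^2) - 1) - 3 := by linarith
    _ ≤ 1 - 16*(1-lam)^2/(4-lam)^2 := this
    _ = 1 - 16*((1-lam)/(4-lam))^2 := by rw [div_pow]; ring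


theorem stmt_8 (lam : ℝ) (hlam : lam ∈ Set.Icc (0:ℝ) 1) (A : ℝ → ℝ)
    (hconv : ConvexOn ℝ (Set.Icc (0:ℝ) 1) A)
    (hbd : ∀ t ∈ Set.Icc (0:ℝ) 1, max t (1 - t) ≤ A t ∧ A t ≤ 1)
    (hmid : A (1 / 2) = 1 - lam / 2) :
    12 * (∫ t in (0:ℝ)..1, 1 / (A t + 1) ^ 2) - 3
      ≤ 1 - 16 * ((1 - lam) / (4 - lam)) ^ 2 ∧
    12 * (∫ t in (0:ℝ)..1, 1 / (max t (max (1 - t) (1 - lam / 2)) + 1) ^ 2) - 3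
      = 1 - 16 * ((1 - lam) / (4 - lam)) ^ 2 := by
  obtain ⟨h0, h1⟩ := hlam
  have hA0 : A 0 = 1 := by
    have h := hbd 0 ⟨le_refl 0, zero_le_one⟩
    have : (1:ℝ) ≤ max (0:ℝ) (1 - 0) := by norm_num
    exact le_antisymm h.2 (le_trans this h.1)
  have hA1 : A 1 = 1 := by
    have h := hbd 1 ⟨zero_le_one, le_refl 1⟩
    have : (1:ℝ) ≤ max (1:ℝ) (1 - 1) := by norm_num
    exact le_antisymm h.2 (le_trans this h.1)
  have hAge : ∀ t ∈ Set.Icc (0:ℝ) 1, (1/2:ℝ) ≤ A t := by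
    intro t ht
    refine le_trans ?_ (hbd t ht).1
    rcases le_total t (1/2) with h | h
    · exact le_max_of_le_right (by linarith)
    · exact le_max_of_le_left h
  have hIoo : ContinuousOn A (Ioo (0:ℝ) 1) :=
    ConvexOn.continuousOn isOpen_Ioo (hconv.subset Ioo_subset_Icc_self (convex_Ioo 0 1))
  have hgcont : ContinuousOn (fun t => 1/(A t + 1)^2) (Ioo (0:ℝ) 1) := by
    apply ContinuousOn.div continuousOn_const ((hIoo.add continuousOn_const).pow 2)
    intro t ht
    have := hAge t (Ioo_subset_Icc_self ht)
    have : 0 < A t + 1 := by linarith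
    show (A t + 1)^2 ≠ 0
    exact pow_ne_zero 2 this.ne'
  have hint : IntervalIntegrable (fun t => 1/(A t + 1)^2) volume 0 1 := by
    rw [intervalIntegrable_iff_integrableOn_Ioc_of_le (by norm_num)]
    have hres : volume.restrict (Ioc (0:ℝ) 1) = volume.restrict (Ioo (0:ℝ) 1) :=
      (Measure.restrict_congr_set Ioo_ae_eq_Ioc).symm
    unfold IntegrableOn
    rw [hres]
    apply Integrable.mono' (integrable_const (1:ℝ))
    · exact hgcont.aestronglyMeasurable measurableSet_Ioo
    · rw [ae_restrict_iff' measurableSet_Ioo]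
      apply ae_of_all
      intro t ht
      have := hAge t (Ioo_subset_Icc_self ht)
      rw [Real.norm_eq_abs, abs_of_nonneg (by positivity), div_le_one (by positivity)]
      nlinarith
  obtain ⟨s, hsl, hsr, hsupp⟩ := support_line lam h0 h1 A hconv hA0 hA1 hmid
  constructor
  · by_cases hc : -1 < s ∧ s < 1
    · apply key_ineq lam s A h0 h1 hsl hsr hc.1 hc.2 _ hint
      intro t ht
      exact max_le (le_trans (le_max_left _ _) (hbd t ht).1)
        (max_le (le_trans (le_max_right _ _) (hbd t ht).1) (hsupp t ht))
    · have hlam1 : lam = 1 := by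
        rcases not_and_or.mp hc with h | h
        · push_neg at h; linarith
        · push_neg at h; linarith
      apply key_ineq lam 0 A h0 h1 (by linarith) h0 (by norm_num) (by norm_num) _ hint
      intro t ht
      refine max_le (le_trans (le_max_left _ _) (hbd t ht).1)
        (max_le (le_trans (le_max_right _ _) (hbd t ht).1) ?_)
      have : 1 - lam/2 + 0*(t - 1/2) = 1/2 := by rw [hlam1]; ring
      rw [this]
      exact hAge t ht
  · have h := Hval lam 0 h0 h1 (by linarith) h0 (by norm_num) (by norm_num)
    have hcg : (∫ t in (0:ℝ)..1, 1 / (max t (max (1 - t) (1 - lam / 2)) + 1) ^ 2)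
        = ∫ t in (0:ℝ)..1, 1/(max t (max (1 - t) (1 - lam/2 + 0*(t - 1/2))) + 1)^2 := by
      apply intervalIntegral.integral_congr
      intro t _
      norm_num
    rw [hcg, h]
    have hne : (4:ℝ) - lam ≠ 0 := by linarith
    rw [div_pow]
    field_simp
    ring
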